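/- Lower bounds on the total-variation distance between quantal responses. Let Q, Q̃ : B → ℝ with ν = ν_Q, ν̃ = ν_{Q̃}, A = A_Q, Ã = A_{Q̃}. Then: (i) D_TV(ν, ν̃) ≥ (1/2)·Σ_{b∈B} ν(b)·η·exp(−η·|Ã(b) − A(b)|)·|Ã(b) − A(b)|; and (ii) if moreover B_A > 0 satisfies ‖A‖_∞ ≤ B_A and ‖Ã‖_∞ ≤ B_A, then D_TV(ν, ν̃) ≥ (η / (2·(1 + 2ηB_A)))·Σ_{b∈B} ν(b)·|Ã(b) − A(b)|. -/

import Mathlib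

open Finset

noncomputable section

namespace QSE6

variable {B : Type*} [Fintype B]

/-- Soft value `V(Q) = η⁻¹ log Σ_b exp(η Q b)`. -/
def softVal (η : ℝ) (Q : B → ℝ) : ℝ := η⁻¹ * Real.log (∑ b, Real.exp (η * Q b))

/-- Advantage `A_Q(b) = Q b − V(Q)`. -/
def adv (η : ℝ) (Q : B → ℝ) (b : B) : ℝ := Q b - softVal η Q

/-- Quantal response `ν_Q(b) = exp(η A_Q(b))`. -/
def qres (η : ℝ) (Q : B → ℝ) (b : B) : ℝ := Real.exp (η * adv η Q b)

/-- Total-variation distance between (densities of) distributions on `B`. -/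
def dTV (p q : B → ℝ) : ℝ := (1 / 2) * ∑ b, |p b - q b|

lemma aux1 (x : ℝ) : |x| * Real.exp (-|x|) ≤ |Real.exp x - 1| := by
  rcases le_or_gt 0 x with hx | hx
  · rw [abs_of_nonneg hx, abs_of_nonneg (by linarith [Real.one_le_exp hx])]
    calc x * Real.exp (-x) ≤ x * 1 := by
          have := Real.exp_le_one_iff.mpr (by linarith : -x ≤ 0)
          nlinarith
      _ = x := mul_one x
      _ ≤ Real.exp x - 1 := by linarith [Real.add_one_le_exp x]
  · rw [abs_of_neg hx, abs_of_neg (by linarith [Real.exp_lt_one_iff.mpr hx] : Real.exp x - 1 < 0)]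
    have h1 : 1 - x ≤ Real.exp (-x) := by linarith [Real.add_one_le_exp (-x)]
    have h2 : Real.exp x * Real.exp (-x) = 1 := by
      rw [← Real.exp_add]; simp
    simp only [neg_neg]
    nlinarith [Real.exp_pos x, mul_le_mul_of_nonneg_left h1 (le_of_lt (Real.exp_pos x))]

lemma aux2 (x T : ℝ) (hx : |x| ≤ T) : |x| / (1 + T) ≤ |Real.exp x - 1| := by
  have hT : 0 ≤ T := le_trans (abs_nonneg x) hx
  rcases le_or_gt 0 x with hx0 | hx0
  · rw [abs_of_nonneg hx0, abs_of_nonneg (by linarith [Real.one_le_exp hx0])]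
    calc x / (1 + T) ≤ x := by
          rw [div_le_iff₀ (by linarith)]; nlinarith
      _ ≤ Real.exp x - 1 := by linarith [Real.add_one_le_exp x]
  · rw [abs_of_neg hx0, abs_of_neg (by linarith [Real.exp_lt_one_iff.mpr hx0] : Real.exp x - 1 < 0)]
    have ht : -x ≤ T := by rw [abs_of_neg hx0] at hx; exact hx
    have h1 : 1 + (-x) ≤ Real.exp (-x) := by linarith [Real.add_one_le_exp (-x)]
    have h2 : Real.exp x * Real.exp (-x) = 1 := by rw [← Real.exp_add]; simp
    have h3 : Real.exp x ≤ 1 / (1 - x) := by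
      rw [le_div_iff₀ (by linarith)]
      nlinarith [Real.exp_pos x]
    rw [div_le_iff₀ (by linarith : (0:ℝ) < 1 + T)]
    have h4 : 1 - Real.exp x ≥ 1 - 1 / (1 - x) := by linarith
    have hne : (1:ℝ) - x ≠ 0 := by linarith
    have h5 : 1 - 1 / (1 - x) = -x / (1 - x) := by
      field_simp
      ring
    have h6 : -x / (1 - x) ≥ -x / (1 + T) := by
      apply div_le_div_of_nonneg_left (by linarith) (by linarith) (by linarith)
    have h7 : -x / (1 + T) * (1 + T) = -x := by field_simp
    nlinarith [div_nonneg (by linarith : (0:ℝ) ≤ -x) (by linarith : (0:ℝ) ≤ 1 + T)]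

lemma key (η : ℝ) (Q Qt : B → ℝ) (b : B) :
    |qres η Q b - qres η Qt b|
      = qres η Q b * |Real.exp (η * (adv η Qt b - adv η Q b)) - 1| := by
  have : qres η Qt b = qres η Q b * Real.exp (η * (adv η Qt b - adv η Q b)) := by
    unfold qres; rw [← Real.exp_add]; ring_nf
  rw [this, ← mul_one_sub, abs_mul, abs_sub_comm,
    abs_of_pos (show (0:ℝ) < qres η Q b from Real.exp_pos _)]

/-- Lower bounds on the TV distance between quantal responses:
(i) `D_TV(ν,ν̃) ≥ (1/2) Σ_b ν(b) η exp(−η|Ã−A|)|Ã−A|`, and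
(ii) if `‖A‖_∞ ≤ B_A` and `‖Ã‖_∞ ≤ B_A` then
`D_TV(ν,ν̃) ≥ (η/(2(1+2ηB_A))) Σ_b ν(b)|Ã−A|`. -/
theorem tv_lower_bounds_quantal
    {B : Type*} [Fintype B] [Nonempty B]
    (η : ℝ) (hη : 0 < η) (Q Qt : B → ℝ) :
    dTV (qres η Q) (qres η Qt) ≥
      (1 / 2) * ∑ b, qres η Q b *
        (η * Real.exp (-(η * |adv η Qt b - adv η Q b|)) * |adv η Qt b - adv η Q b|) ∧
    (∀ BA : ℝ, 0 < BA → (∀ b, |adv η Q b| ≤ BA) → (∀ b, |adv η Qt b| ≤ BA) →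
      dTV (qres η Q) (qres η Qt) ≥
        η / (2 * (1 + 2 * η * BA)) * ∑ b, qres η Q b * |adv η Qt b - adv η Q b|) := by
  constructor
  · unfold dTV
    apply mul_le_mul_of_nonneg_left _ (by norm_num : (0:ℝ) ≤ 1/2)
    apply Finset.sum_le_sum
    intro b _
    rw [key η Q Qt b]
    apply mul_le_mul_of_nonneg_left _ (le_of_lt (Real.exp_pos _))
    set d := adv η Qt b - adv η Q b
    have h := aux1 (η * d)
    have habs : |η * d| = η * |d| := by rw [abs_mul, abs_of_pos hη]
    rw [habs] at h
    calc η * Real.exp (-(η * |d|)) * |d| = η * |d| * Real.exp (-(η * |d|)) := by ring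
      _ ≤ |Real.exp (η * d) - 1| := h
  · intro BA hBA hA hAt
    unfold dTV
    have hrw : η / (2 * (1 + 2 * η * BA)) * ∑ b, qres η Q b * |adv η Qt b - adv η Q b|
        = (1/2) * ∑ b, qres η Q b * ((η * |adv η Qt b - adv η Q b|) / (1 + 2 * η * BA)) := by
      rw [Finset.mul_sum, Finset.mul_sum]
      apply Finset.sum_congr rfl
      intro b _
      have : (0:ℝ) < 1 + 2 * η * BA := by nlinarith
      field_simp
    rw [hrw]
    apply mul_le_mul_of_nonneg_left _ (by norm_num : (0:ℝ) ≤ 1/2)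
    apply Finset.sum_le_sum
    intro b _
    rw [key η Q Qt b]
    apply mul_le_mul_of_nonneg_left _ (le_of_lt (Real.exp_pos _))
    set d := adv η Qt b - adv η Q b with hd
    have hdb : |d| ≤ 2 * BA := by
      calc |d| ≤ |adv η Qt b| + |adv η Q b| := abs_sub _ _
        _ ≤ BA + BA := add_le_add (hAt b) (hA b)
        _ = 2 * BA := by ring
    have hxT : |η * d| ≤ 2 * η * BA := by
      rw [abs_mul, abs_of_pos hη]; nlinarith
    have h := aux2 (η * d) (2 * η * BA) hxT
    have habs : |η * d| = η * |d| := by rw [abs_mul, abs_of_pos hη]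
    rw [habs] at h
    exact h

end QSE6
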